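/- Suppose f : [0,∞) → R^d has the following property: there are constants H > 0, K ≥ 1, and for each n ≥ 1, with t_n = 2^{−n}, every dyadic interval I = [(j−1)t_n, j t_n] ⊆ [0,1] (for n sufficiently large) has image f(I) covered by K balls of radius t_n^γ, where 0 < γ < H. Then for every Borel set E ⊆ [0,1], the Hausdorff dimension of f(E) satisfies dim_H f(E) ≤ (dim_H E)/γ. -/

import Mathlib

open MeasureTheory Metric Set ENNReal
noncomputable section

lemma two_inv_pow_pos (n : ℕ) : (0:ℝ) < (2:ℝ)⁻¹ ^ n := by positivity

lemma rpow_pow_comm (t : ℝ) (n : ℕ) :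
    (((2:ℝ)⁻¹ ^ n) ^ t) = ((2:ℝ)⁻¹ ^ t) ^ n := by
  rw [← Real.rpow_natCast (2:ℝ)⁻¹ n, ← Real.rpow_natCast ((2:ℝ)⁻¹ ^ t) n,
    ← Real.rpow_mul (by norm_num), ← Real.rpow_mul (by norm_num), mul_comm]

lemma pow_anti {m n : ℕ} (h : m ≤ n) : (2:ℝ)⁻¹ ^ n ≤ (2:ℝ)⁻¹ ^ m :=
  pow_le_pow_of_le_one (by norm_num) (by norm_num) h

lemma aux0 {a C : ℝ≥0∞} (hC : C ≠ ∞) (h : ∀ δ : ℝ, 0 < δ → a ≤ C * ENNReal.ofReal δ) :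
    a = 0 := by
  by_contra ha
  obtain ⟨δ, hδ0, hδ⟩ := ENNReal.exists_nnreal_pos_mul_lt hC ha
  have h2 := h δ hδ0
  rw [ENNReal.ofReal_coe_nnreal] at h2
  exact absurd (h2.trans_lt (by rwa [mul_comm] at hδ)) (lt_irrefl _)

lemma two_pow_mul_inv_pow (n : ℕ) : ((2^n : ℕ):ℝ) * (2:ℝ)⁻¹ ^ n = 1 := by
  push_cast
  rw [← mul_pow]
  norm_num

lemma dyadic_cover (n : ℕ) (U : Set ℝ) (hb : EMetric.diam U ≤ ENNReal.ofReal ((2:ℝ)⁻¹ ^ n)) :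
    ∃ j₁ j₂ : ℕ, 1 ≤ j₁ ∧ j₁ ≤ 2^n ∧ 1 ≤ j₂ ∧ j₂ ≤ 2^n ∧
      U ∩ Set.Icc 0 1 ⊆ Set.Icc (((j₁:ℝ)-1) * (2:ℝ)⁻¹^n) ((j₁:ℝ) * (2:ℝ)⁻¹^n) ∪
        Set.Icc (((j₂:ℝ)-1) * (2:ℝ)⁻¹^n) ((j₂:ℝ) * (2:ℝ)⁻¹^n) := by
  set p : ℝ := (2:ℝ)⁻¹ ^ n with hp_def
  have hp : (0:ℝ) < p := two_inv_pow_pos n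
  have hP1 : 1 ≤ 2^n := Nat.one_le_two_pow
  rcases eq_empty_or_nonempty (U ∩ Set.Icc 0 1) with hS | hS
  · exact ⟨1, 1, le_rfl, hP1, le_rfl, hP1, by rw [hS]; exact empty_subset _⟩
  set S := U ∩ Set.Icc 0 1 with hS_def
  have hSsub : S ⊆ Set.Icc 0 1 := inter_subset_right
  have hbdd : BddBelow S := ⟨0, fun y hy => (hSsub hy).1⟩
  set a : ℝ := sInf S with ha_def
  have ha0 : 0 ≤ a := le_csInf hS fun y hy => (hSsub hy).1
  -- diameter bound in ℝ
  have hUbd : Bornology.IsBounded U := by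
    rw [Metric.isBounded_iff_ediam_ne_top]
    exact ne_top_of_le_ne_top ENNReal.ofReal_ne_top hb
  have hdiam : Metric.diam U ≤ p := by
    have := ENNReal.toReal_mono ENNReal.ofReal_ne_top hb
    rwa [ENNReal.toReal_ofReal hp.le] at this
  have hxa : ∀ x ∈ S, x ≤ a + p := by
    intro x hx
    have hlb : ∀ y ∈ S, x - p ≤ y := by
      intro y hy
      have := Metric.dist_le_diam_of_mem hUbd hx.1 hy.1
      have h2 : x - y ≤ Metric.diam U := (le_abs_self _).trans (by rwa [Real.dist_eq] at this)
      linarith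
    have := le_csInf hS hlb
    linarith
  set m : ℕ := (⌊a * 2^n⌋).toNat with hm_def
  have hm_nonneg : (0:ℤ) ≤ ⌊a * 2^n⌋ := Int.floor_nonneg.2 (by positivity)
  have hm1 : (m:ℝ) ≤ a * 2^n := by
    rw [hm_def]
    have h := Int.floor_le (a * 2^n)
    rw [← Int.toNat_of_nonneg hm_nonneg] at h
    exact_mod_cast h
  have hm2 : a * 2^n < (m:ℝ) + 1 := by
    rw [hm_def]
    have := Int.lt_floor_add_one (a * 2^n)
    rw [← Int.toNat_of_nonneg hm_nonneg] at this
    exact_mod_cast this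
  have hPp : ((2^n : ℕ):ℝ) * p = 1 := two_pow_mul_inv_pow n
  have h2n : ((2:ℝ))^n * p = 1 := by push_cast at hPp ⊢; linarith [hPp]
  refine ⟨min (m+1) (2^n), min (m+2) (2^n), le_min (by omega) hP1, min_le_right _ _,
    le_min (by omega) hP1, min_le_right _ _, ?_⟩
  intro x hx
  have hax : a ≤ x := csInf_le hbdd hx
  have hx01 : x ∈ Set.Icc (0:ℝ) 1 := hSsub hx
  have hxap : x ≤ a + p := hxa x hx
  by_cases hmP : m + 1 ≤ 2^n
  · rw [min_eq_left hmP]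
    by_cases hxm : x ≤ ((m:ℝ)+1) * p
    · left
      constructor
      · push_cast
        have : (m:ℝ) * p ≤ a := by
          have := mul_le_mul_of_nonneg_right hm1 hp.le
          rw [mul_assoc, h2n, mul_one] at this
          linarith
        simp only [add_sub_cancel_right]
        linarith
      · push_cast; linarith
    · right
      push_neg at hxm
      have hmP2 : m + 2 ≤ 2^n := by
        by_contra hc
        have hme : m + 1 = 2^n := by omega
        have : x ≤ 1 := hx01.2
        have h1 : ((m:ℝ)+1) * p = 1 := by
          rw [show ((m:ℝ)+1) = ((2^n : ℕ):ℝ) from by exact_mod_cast hme, hPp]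
        linarith
      rw [min_eq_left hmP2]
      have ha_lt : a < ((m:ℝ)+1) * p := by
        have := mul_lt_mul_of_pos_right hm2 hp
        rw [mul_assoc, h2n, mul_one] at this
        linarith
      constructor
      · push_cast; linarith
      · push_cast; linarith
  · -- m ≥ 2^n, so a ≥ 1, x = 1
    have hm2n : (2:ℕ)^n ≤ m := by omega
    have ha1 : 1 ≤ a := by
      have : ((2^n:ℕ):ℝ) ≤ a * 2^n := le_trans (by exact_mod_cast hm2n) hm1
      have := mul_le_mul_of_nonneg_right this hp.le
      rw [hPp, mul_assoc, h2n, mul_one] at this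
      linarith
    have hx1 : x = 1 := le_antisymm hx01.2 (le_trans ha1 hax)
    left
    rw [min_eq_right (by omega)]
    subst hx1
    constructor
    · have : ((2^n:ℕ):ℝ) * p = 1 := hPp
      push_cast at this ⊢
      nlinarith [hp.le]
    · have : ((2^n:ℕ):ℝ) * p = 1 := hPp
      push_cast at this ⊢
      linarith

lemma key {d : ℕ} (f : ℝ → EuclideanSpace ℝ (Fin d)) (γ : ℝ) (hγ : 0 < γ)
    (K : ℕ) (hK : 1 ≤ K) (n₀ : ℕ)
    (hcov : ∀ n : ℕ, n₀ ≤ n → ∀ j : ℕ, 1 ≤ j → j ≤ 2 ^ n →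
      ∃ c : Fin K → EuclideanSpace ℝ (Fin d),
        f '' Set.Icc (((j : ℝ) - 1) * (2 : ℝ)⁻¹ ^ n) ((j : ℝ) * (2 : ℝ)⁻¹ ^ n)
          ⊆ ⋃ i : Fin K, Metric.closedBall (c i) (((2 : ℝ)⁻¹ ^ n) ^ γ))
    (E : Set ℝ) (hE : E ⊆ Set.Icc 0 1) (t : ℝ) (ht : 0 < t)
    (hμ : μH[t] E = 0) : μH[t / γ] (f '' E) = 0 := by
  set s : ℝ := t / γ with hs_def
  have hs : 0 < s := div_pos ht hγ
  have hγs : γ * s = t := by rw [hs_def, mul_comm, div_mul_cancel₀ t hγ.ne']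
  set q : ℝ := (2:ℝ)⁻¹ ^ t with hq_def
  have hq0 : 0 < q := Real.rpow_pos_of_pos (by norm_num) t
  have hq1 : q < 1 := Real.rpow_lt_one (by norm_num) (by norm_num) ht
  set B : ℝ≥0∞ := (1 - ENNReal.ofReal q)⁻¹ with hB_def
  have hq1' : ENNReal.ofReal q < 1 := by
    rw [← ENNReal.ofReal_one]; exact ENNReal.ofReal_lt_ofReal_iff_of_nonneg hq0.le |>.2 hq1
  have hB : B ≠ ∞ := by
    rw [hB_def, Ne, ENNReal.inv_eq_top, tsub_eq_zero_iff_le]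
    exact not_le.2 hq1'
  set C : ℝ≥0∞ := (2*K : ℕ) * ENNReal.ofReal ((2:ℝ) ^ s) * (ENNReal.ofReal ((2:ℝ) ^ t) + B)
    with hC_def
  have hC : C ≠ ∞ := by
    rw [hC_def]
    exact ENNReal.mul_ne_top (ENNReal.mul_ne_top (ENNReal.natCast_ne_top _)
      ENNReal.ofReal_ne_top) (ENNReal.add_ne_top.2 ⟨ENNReal.ofReal_ne_top, hB⟩)
  rw [MeasureTheory.Measure.hausdorffMeasure_apply]
  refine le_antisymm (iSup₂_le fun r' hr' => ?_) zero_le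
  obtain ⟨r₀, hr₀, hr₀le⟩ : ∃ r₀ : ℝ, 0 < r₀ ∧ ENNReal.ofReal r₀ ≤ r' := by
    rcases eq_or_ne r' ∞ with h | h
    · exact ⟨1, one_pos, by simp [h]⟩
    · refine ⟨(min r' 1).toReal, ENNReal.toReal_pos ?_ ?_, ?_⟩
      · simp only [Ne, min_eq_iff, not_or]
        constructor
        · rintro ⟨h1, -⟩; exact hr'.ne' h1
        · rintro ⟨h1, -⟩; exact one_ne_zero h1
      · exact ne_top_of_le_ne_top ENNReal.one_ne_top (min_le_right _ _)
      · rw [ENNReal.ofReal_toReal (ne_top_of_le_ne_top ENNReal.one_ne_top (min_le_right _ _))]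
        exact min_le_left _ _
  refine le_of_eq (aux0 hC ?_)
  intro δ hδ
  -- choose N
  set qγ : ℝ := (2:ℝ)⁻¹ ^ γ with hqγ_def
  have hqγ0 : 0 < qγ := Real.rpow_pos_of_pos (by norm_num) γ
  have hqγ1 : qγ < 1 := Real.rpow_lt_one (by norm_num) (by norm_num) hγ
  obtain ⟨N₁, hN₁⟩ := exists_pow_lt_of_lt_one (half_pos hr₀) hqγ1
  obtain ⟨N₂, hN₂⟩ := exists_pow_lt_of_lt_one hδ hq1
  set N : ℕ := max n₀ (max N₁ N₂) with hN_def
  have haN : n₀ ≤ N := le_max_left _ _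
  have hNb : 2 * ((2:ℝ)⁻¹ ^ N) ^ γ ≤ r₀ := by
    have h1 : ((2:ℝ)⁻¹ ^ N) ^ γ = qγ ^ N := rpow_pow_comm γ N
    have h2 : qγ ^ N ≤ qγ ^ N₁ :=
      pow_le_pow_of_le_one hqγ0.le hqγ1.le (le_trans (le_max_left _ _) (le_max_right _ _))
    rw [h1]; nlinarith
  have hNc : q ^ N ≤ δ := by
    have h2 : q ^ N ≤ q ^ N₂ :=
      pow_le_pow_of_le_one hq0.le hq1.le (le_trans (le_max_right _ _) (le_max_right _ _))
    linarith
  -- extract a good cover of E at scale 2⁻¹^N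
  have h1 : (⨅ (tt : ℕ → Set ℝ) (_ : E ⊆ ⋃ n, tt n)
      (_ : ∀ n, EMetric.diam (tt n) ≤ ENNReal.ofReal ((2:ℝ)⁻¹ ^ N)),
      ∑' n, ⨆ _ : (tt n).Nonempty, EMetric.diam (tt n) ^ t) = 0 := by
    refine le_antisymm ?_ zero_le
    calc (⨅ (tt : ℕ → Set ℝ) (_ : E ⊆ ⋃ n, tt n)
        (_ : ∀ n, EMetric.diam (tt n) ≤ ENNReal.ofReal ((2:ℝ)⁻¹ ^ N)),
        ∑' n, ⨆ _ : (tt n).Nonempty, EMetric.diam (tt n) ^ t)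
        ≤ μH[t] E := by
          rw [MeasureTheory.Measure.hausdorffMeasure_apply]
          exact le_iSup₂ (f := fun (r : ℝ≥0∞) (_ : 0 < r) =>
            ⨅ (tt : ℕ → Set ℝ) (_ : E ⊆ ⋃ n, tt n)
            (_ : ∀ n, EMetric.diam (tt n) ≤ r),
            ∑' n, ⨆ _ : (tt n).Nonempty, EMetric.diam (tt n) ^ t)
            (ENNReal.ofReal ((2:ℝ)⁻¹ ^ N)) (ENNReal.ofReal_pos.2 (two_inv_pow_pos N))
      _ = 0 := hμ
  have h2 : (⨅ (tt : ℕ → Set ℝ) (_ : E ⊆ ⋃ n, tt n)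
      (_ : ∀ n, EMetric.diam (tt n) ≤ ENNReal.ofReal ((2:ℝ)⁻¹ ^ N)),
      ∑' n, ⨆ _ : (tt n).Nonempty, EMetric.diam (tt n) ^ t) < ENNReal.ofReal δ := by
    rw [h1]; exact ENNReal.ofReal_pos.2 hδ
  simp only [iInf_lt_iff] at h2
  obtain ⟨U, hUcov, hUdiam, hUsum⟩ := h2
  -- per-index data
  set δU : ℕ → ℝ := fun i => Metric.diam (U i) with hδU_def
  have hδU0 : ∀ i, 0 ≤ δU i := fun i => Metric.diam_nonneg
  have hfinU : ∀ i, EMetric.diam (U i) ≠ ∞ :=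
    fun i => ne_top_of_le_ne_top ENNReal.ofReal_ne_top (hUdiam i)
  have hediam : ∀ i, EMetric.diam (U i) = ENNReal.ofReal (δU i) :=
    fun i => (ENNReal.ofReal_toReal (hfinU i)).symm
  have hδUN : ∀ i, δU i ≤ (2:ℝ)⁻¹ ^ N := by
    intro i
    have := ENNReal.toReal_mono ENNReal.ofReal_ne_top (hUdiam i)
    rwa [ENNReal.toReal_ofReal (two_inv_pow_pos N).le] at this
  have hex : ∀ i, 0 < δU i → ∃ m:ℕ, (2:ℝ)⁻¹ ^ m < δU i :=
    fun i h => exists_pow_lt_of_lt_one h (by norm_num)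
  set nn : ℕ → ℕ := fun i => if h : 0 < δU i then Nat.find (hex i h) - 1 else N + i with hnn_def
  have hfind : ∀ i (h : 0 < δU i), N + 1 ≤ Nat.find (hex i h) := by
    intro i h
    rw [Nat.le_find_iff]
    intro m hm
    push_neg
    exact le_trans (hδUN i) (pow_anti (by omega))
  have hnN : ∀ i, N ≤ nn i := by
    intro i
    by_cases h : 0 < δU i
    · simp only [hnn_def, dif_pos h]
      have := hfind i h
      omega
    · simp only [hnn_def, dif_neg h]
      omega
  have hn0 : ∀ i, n₀ ≤ nn i := fun i => le_trans haN (hnN i)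
  have hδn : ∀ i, δU i ≤ (2:ℝ)⁻¹ ^ (nn i) := by
    intro i
    by_cases h : 0 < δU i
    · simp only [hnn_def, dif_pos h]
      have hF1 : 1 ≤ Nat.find (hex i h) := le_trans (by omega) (hfind i h)
      have := Nat.find_min (hex i h) (m := Nat.find (hex i h) - 1) (by omega)
      push_neg at this
      exact this
    · push_neg at h
      exact le_trans h (two_inv_pow_pos _).le
  have hkey : ∀ i, ((2:ℝ)⁻¹ ^ nn i) ^ t ≤ (2:ℝ)^t * (δU i)^t + q ^ (N + i) := by
    intro i
    by_cases h : 0 < δU i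
    · have h2 : (2:ℝ)⁻¹ ^ (nn i) < 2 * δU i := by
        simp only [hnn_def, dif_pos h]
        have hFlt : (2:ℝ)⁻¹ ^ (Nat.find (hex i h)) < δU i := Nat.find_spec (hex i h)
        have hF1 : 1 ≤ Nat.find (hex i h) := le_trans (by omega) (hfind i h)
        have heq : Nat.find (hex i h) = (Nat.find (hex i h) - 1) + 1 := by omega
        rw [heq, pow_succ] at hFlt
        nlinarith [two_inv_pow_pos (Nat.find (hex i h) - 1)]
      have h3 : ((2:ℝ)⁻¹ ^ nn i) ^ t ≤ (2 * δU i) ^ t :=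
        Real.rpow_le_rpow (two_inv_pow_pos _).le h2.le ht.le
      have h4 : (2 * δU i) ^ t = (2:ℝ)^t * (δU i)^t := Real.mul_rpow (by norm_num) (hδU0 i)
      have h5 : 0 < q ^ (N + i) := pow_pos hq0 _
      nlinarith
    · have hni : nn i = N + i := by simp only [hnn_def, dif_neg h]
      rw [hni, rpow_pow_comm t (N+i), ← hq_def]
      have : 0 ≤ (2:ℝ)^t * (δU i)^t := by positivity
      linarith
  -- dyadic intervals and ball centers
  have hdy := fun i => dyadic_cover (nn i) (U i)
    (by rw [hediam i]; exact ENNReal.ofReal_le_ofReal (hδn i))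
  choose j₁ j₂ hj₁a hj₁b hj₂a hj₂b hjsub using hdy
  choose c₁ hc₁ using fun i => hcov (nn i) (hn0 i) (j₁ i) (hj₁a i) (hj₁b i)
  choose c₂ hc₂ using fun i => hcov (nn i) (hn0 i) (j₂ i) (hj₂a i) (hj₂b i)
  set ρ : ℕ → ℝ := fun i => ((2:ℝ)⁻¹ ^ nn i) ^ γ with hρ_def
  have hρ0 : ∀ i, 0 < ρ i := fun i => Real.rpow_pos_of_pos (two_inv_pow_pos _) γ
  have hKpos : 0 < K := hK
  set V : ℕ × ℕ → Set (EuclideanSpace ℝ (Fin d)) := fun p =>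
    if h : p.2 < 2 * K then
      Metric.closedBall ((if p.2 < K then c₁ p.1 else c₂ p.1) ⟨p.2 % K, Nat.mod_lt _ hKpos⟩)
        (ρ p.1)
    else ∅ with hV_def
  set e : ℕ ≃ ℕ × ℕ := (Denumerable.eqv (ℕ × ℕ)).symm with he_def
  set W : ℕ → Set (EuclideanSpace ℝ (Fin d)) := fun n => V (e n) with hW_def
  -- the cover property
  have hWcov : f '' E ⊆ ⋃ n, W n := by
    rintro y ⟨x, hxE, rfl⟩
    obtain ⟨i, hxU⟩ := mem_iUnion.1 (hUcov hxE)
    have hxS : x ∈ U i ∩ Set.Icc 0 1 := ⟨hxU, hE hxE⟩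
    have hmem : ∃ m : ℕ, f x ∈ V (i, m) := by
      rcases hjsub i hxS with hx1 | hx2
      · obtain ⟨k, hk⟩ := mem_iUnion.1 (hc₁ i ⟨x, hx1, rfl⟩)
        refine ⟨(k : ℕ), ?_⟩
        have hk2 : (k:ℕ) < 2 * K := by omega
        have hk1 : (k:ℕ) < K := k.2
        simp only [hV_def, dif_pos hk2, if_pos hk1]
        convert hk using 3
        exact Fin.ext (Nat.mod_eq_of_lt k.2)
      · obtain ⟨k, hk⟩ := mem_iUnion.1 (hc₂ i ⟨x, hx2, rfl⟩)
        refine ⟨K + (k : ℕ), ?_⟩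
        have hk2 : K + (k:ℕ) < 2 * K := by omega
        have hk1 : ¬ (K + (k:ℕ) < K) := by omega
        simp only [hV_def, dif_pos hk2, if_neg hk1]
        convert hk using 3
        refine Fin.ext ?_
        simp [Nat.add_mod_left, Nat.mod_eq_of_lt k.2]
    obtain ⟨m, hm⟩ := hmem
    exact mem_iUnion.2 ⟨e.symm (i, m), by simpa [hW_def, e.apply_symm_apply] using hm⟩
  have hWdiam : ∀ n, EMetric.diam (W n) ≤ r' := by
    intro n
    show EMetric.diam (V (e n)) ≤ r'
    by_cases h : (e n).2 < 2 * K
    · simp only [hV_def, dif_pos h]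
      calc EMetric.diam (Metric.closedBall _ (ρ (e n).1))
          ≤ 2 * ENNReal.ofReal (ρ (e n).1) := by
            rw [← Metric.emetric_closedBall (hρ0 (e n).1).le]
            exact EMetric.diam_closedBall
        _ = ENNReal.ofReal (2 * ρ (e n).1) := by
            rw [ENNReal.ofReal_mul (by norm_num : (0:ℝ) ≤ 2), ENNReal.ofReal_ofNat]
        _ ≤ ENNReal.ofReal r₀ := by
            refine ENNReal.ofReal_le_ofReal ?_
            have hρle : ρ (e n).1 ≤ ((2:ℝ)⁻¹ ^ N) ^ γ :=
              Real.rpow_le_rpow (two_inv_pow_pos _).le (pow_anti (hnN _)) hγ.le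
            linarith [hNb]
        _ ≤ r' := hr₀le
    · simp only [hV_def, dif_neg h, EMetric.diam_empty]
      exact EMetric.diam_empty.trans_le zero_le
  have hterm : ∀ p : ℕ × ℕ, (⨆ _ : (V p).Nonempty, EMetric.diam (V p) ^ s)
      ≤ (if p.2 < 2*K then ENNReal.ofReal (2 * ρ p.1) ^ s else 0) := by
    intro p
    by_cases h : p.2 < 2*K
    · rw [if_pos h]
      refine iSup_le fun _ => ?_
      refine ENNReal.rpow_le_rpow ?_ hs.le
      simp only [hV_def, dif_pos h]
      calc EMetric.diam (Metric.closedBall _ (ρ p.1))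
          ≤ 2 * ENNReal.ofReal (ρ p.1) := by
            rw [← Metric.emetric_closedBall (hρ0 p.1).le]
            exact EMetric.diam_closedBall
        _ = ENNReal.ofReal (2 * ρ p.1) := by
            rw [ENNReal.ofReal_mul (by norm_num : (0:ℝ) ≤ 2), ENNReal.ofReal_ofNat]
    · rw [if_neg h]
      have hVe : V p = ∅ := by simp [hV_def, h]
      simp [hVe]
  have hinner : ∀ i : ℕ, (∑' m : ℕ, if m < 2*K then ENNReal.ofReal (2 * ρ i) ^ s else 0)
      = ((2*K : ℕ) : ℝ≥0∞) * ENNReal.ofReal (2 * ρ i) ^ s := by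
    intro i
    rw [tsum_eq_sum (s := Finset.range (2*K)) (fun m hm => if_neg (by simpa using hm))]
    rw [Finset.sum_congr rfl (fun m hm => if_pos (Finset.mem_range.1 hm))]
    rw [Finset.sum_const, Finset.card_range, nsmul_eq_mul]
  have hterm2 : ∀ i, ENNReal.ofReal (2 * ρ i) ^ s
      = ENNReal.ofReal ((2:ℝ)^s) * ENNReal.ofReal (((2:ℝ)⁻¹ ^ nn i)^t) := by
    intro i
    rw [ENNReal.ofReal_rpow_of_nonneg (by positivity) hs.le,
      Real.mul_rpow (by norm_num) (hρ0 i).le]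
    have hρs : (ρ i)^s = ((2:ℝ)⁻¹ ^ nn i)^t := by
      simp only [hρ_def]
      rw [← Real.rpow_mul (two_inv_pow_pos _).le, hγs]
    rw [hρs, ENNReal.ofReal_mul (by positivity)]
  have hsplit : ∀ i, ENNReal.ofReal (((2:ℝ)⁻¹ ^ nn i)^t)
      ≤ ENNReal.ofReal ((2:ℝ)^t) * ENNReal.ofReal ((δU i)^t) + ENNReal.ofReal q ^ (N+i) := by
    intro i
    calc ENNReal.ofReal (((2:ℝ)⁻¹ ^ nn i)^t)
        ≤ ENNReal.ofReal ((2:ℝ)^t * (δU i)^t + q^(N+i)) := ENNReal.ofReal_le_ofReal (hkey i)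
      _ = _ := by
          rw [ENNReal.ofReal_add (by positivity) (by positivity),
            ENNReal.ofReal_mul (by positivity), ENNReal.ofReal_pow hq0.le]
  have hSi : ∀ i, ENNReal.ofReal ((δU i)^t)
      ≤ ⨆ _ : (U i).Nonempty, EMetric.diam (U i) ^ t := by
    intro i
    by_cases h : (U i).Nonempty
    · rw [iSup_pos h, hediam i, ENNReal.ofReal_rpow_of_nonneg (hδU0 i) ht.le]
    · have hUe : U i = ∅ := not_nonempty_iff_eq_empty.1 h
      have hd0 : δU i = 0 := by simp [hδU_def, hUe]
      rw [hd0, Real.zero_rpow ht.ne', ENNReal.ofReal_zero]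
      exact zero_le
  have hS : ∑' i, ENNReal.ofReal ((δU i)^t) ≤ ENNReal.ofReal δ :=
    le_trans (ENNReal.tsum_le_tsum hSi) hUsum.le
  have hqN : (ENNReal.ofReal q)^N ≤ ENNReal.ofReal δ := by
    rw [← ENNReal.ofReal_pow hq0.le]
    exact ENNReal.ofReal_le_ofReal hNc
  have hinner2 : ∑' i, ENNReal.ofReal (((2:ℝ)⁻¹ ^ nn i)^t)
      ≤ ENNReal.ofReal ((2:ℝ)^t) * ENNReal.ofReal δ + ENNReal.ofReal δ * B := by
    calc ∑' i, ENNReal.ofReal (((2:ℝ)⁻¹ ^ nn i)^t)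
        ≤ ∑' i, (ENNReal.ofReal ((2:ℝ)^t) * ENNReal.ofReal ((δU i)^t)
            + ENNReal.ofReal q ^ (N+i)) := ENNReal.tsum_le_tsum hsplit
      _ = ENNReal.ofReal ((2:ℝ)^t) * (∑' i, ENNReal.ofReal ((δU i)^t))
            + (ENNReal.ofReal q)^N * (1 - ENNReal.ofReal q)⁻¹ := by
          rw [ENNReal.tsum_add, ENNReal.tsum_mul_left]
          congr 1
          simp only [pow_add]
          rw [ENNReal.tsum_mul_left, ENNReal.tsum_geometric]
      _ ≤ ENNReal.ofReal ((2:ℝ)^t) * ENNReal.ofReal δ + ENNReal.ofReal δ * B := by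
          rw [← hB_def]
          exact add_le_add (mul_le_mul_right hS _) (mul_le_mul_left hqN _)
  refine iInf₂_le_of_le W hWcov (iInf_le_of_le hWdiam ?_)
  calc (∑' n, ⨆ _ : (W n).Nonempty, EMetric.diam (W n) ^ s)
      = ∑' p : ℕ × ℕ, ⨆ _ : (V p).Nonempty, EMetric.diam (V p) ^ s :=
        e.tsum_eq (fun p => ⨆ _ : (V p).Nonempty, EMetric.diam (V p) ^ s)
    _ ≤ ∑' p : ℕ × ℕ, (if p.2 < 2*K then ENNReal.ofReal (2 * ρ p.1) ^ s else 0) :=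
        ENNReal.tsum_le_tsum hterm
    _ = ∑' i : ℕ, ∑' m : ℕ, (if m < 2*K then ENNReal.ofReal (2 * ρ i) ^ s else 0) :=
        ENNReal.tsum_prod (f := fun i m => if m < 2*K then ENNReal.ofReal (2 * ρ i) ^ s else 0)
    _ = ∑' i : ℕ, ((2*K : ℕ) : ℝ≥0∞) * ENNReal.ofReal (2 * ρ i) ^ s := tsum_congr hinner
    _ = ((2*K:ℕ):ℝ≥0∞) * ∑' i, ENNReal.ofReal (2 * ρ i) ^ s := ENNReal.tsum_mul_left
    _ = ((2*K:ℕ):ℝ≥0∞) * (ENNReal.ofReal ((2:ℝ)^s)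
          * ∑' i, ENNReal.ofReal (((2:ℝ)⁻¹ ^ nn i)^t)) := by
        rw [← ENNReal.tsum_mul_left (a := ENNReal.ofReal ((2:ℝ)^s))]
        exact congrArg _ (tsum_congr hterm2)
    _ ≤ ((2*K:ℕ):ℝ≥0∞) * (ENNReal.ofReal ((2:ℝ)^s)
          * (ENNReal.ofReal ((2:ℝ)^t) * ENNReal.ofReal δ + ENNReal.ofReal δ * B)) :=
        mul_le_mul_right (mul_le_mul_right hinner2 _) _
    _ = C * ENNReal.ofReal δ := by rw [hC_def]; push_cast; ring


/-- If, for all sufficiently large `n`, the image under `f` of every dyadic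
interval `[(j-1) 2^{-n}, j 2^{-n}] ⊆ [0,1]` is covered by `K` balls of radius `(2^{-n})^γ`
(where `0 < γ < H`), then for every Borel set `E ⊆ [0,1]`,
`dim_H f(E) ≤ (dim_H E) / γ`. -/
theorem stmt4 {d : ℕ} (f : ℝ → EuclideanSpace ℝ (Fin d))
    (H γ : ℝ) (hH : 0 < H) (hγ : 0 < γ) (hγH : γ < H)
    (K : ℕ) (hK : 1 ≤ K) (n₀ : ℕ)
    (hcov : ∀ n : ℕ, n₀ ≤ n → ∀ j : ℕ, 1 ≤ j → j ≤ 2 ^ n →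
      ∃ c : Fin K → EuclideanSpace ℝ (Fin d),
        f '' Set.Icc (((j : ℝ) - 1) * (2 : ℝ)⁻¹ ^ n) ((j : ℝ) * (2 : ℝ)⁻¹ ^ n)
          ⊆ ⋃ i : Fin K, Metric.closedBall (c i) (((2 : ℝ)⁻¹ ^ n) ^ γ)) :
    ∀ E : Set ℝ, E ⊆ Set.Icc 0 1 → MeasurableSet E →
      dimH (f '' E) ≤ dimH E / ENNReal.ofReal γ := by
  intro E hE _
  refine dimH_le fun d' hd' => ?_
  by_contra hlt
  push_neg at hlt
  have hne : ENNReal.ofReal γ ≠ 0 := (ENNReal.ofReal_pos.2 hγ).ne'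
  have hlt2 : dimH E < ↑d' * ENNReal.ofReal γ :=
    (ENNReal.div_lt_iff (Or.inl hne) (Or.inl ENNReal.ofReal_ne_top)).1 hlt
  obtain ⟨tq, htq1, htq2⟩ := ENNReal.lt_iff_exists_nnreal_btwn.1 hlt2
  have ht0 : 0 < (tq:ℝ) := by
    have h0 : (0:ℝ≥0∞) < (tq:ℝ≥0∞) := lt_of_le_of_lt zero_le htq1
    exact_mod_cast h0
  have hμ0 : μH[(tq:ℝ)] E = 0 := hausdorffMeasure_of_dimH_lt htq1
  have hk := key f γ hγ K hK n₀ hcov E hE (tq:ℝ) ht0 hμ0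
  have hle : (tq:ℝ)/γ ≤ (d':ℝ) := by
    have h2 : ENNReal.ofReal (tq:ℝ) < ENNReal.ofReal ((d':ℝ) * γ) := by
      rw [ENNReal.ofReal_mul (d'.coe_nonneg), ENNReal.ofReal_coe_nnreal,
        ENNReal.ofReal_coe_nnreal]
      exact htq2
    have h3 : (tq:ℝ) < (d':ℝ) * γ :=
      (ENNReal.ofReal_lt_ofReal_iff_of_nonneg tq.coe_nonneg).1 h2
    rw [div_le_iff₀ hγ]
    exact h3.le
  have h4 : μH[(d':ℝ)] (f '' E) = 0 :=
    le_antisymm (le_trans (MeasureTheory.Measure.hausdorffMeasure_mono hle _) (le_of_eq hk))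
      zero_le
  rw [hd'] at h4
  exact ENNReal.top_ne_zero h4
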